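/- For Y ≥ 2 and s a complex number with Re(s) ≥ 1, we have -ζ'(s,Y)/ζ(s,Y) = Σ_{n ≤ Y} Λ(n) n^{-s} + O(Y^{1/2 - Re(s)}), where ζ(s,Y) = ∏_{p≤Y}(1 - p^{-s})^{-1} and the implied constant is absolute. -/

import Mathlib

open Complex

/-- The set of primes `p ≤ Y`, as a finset. -/
noncomputable def primesUpTo (Y : ℝ) : Finset ℕ :=
  (Finset.range (⌊Y⌋₊ + 1)).filter Nat.Prime

/-- The partial Euler product `ζ(s, Y) = ∏_{p ≤ Y} (1 - p^{-s})⁻¹`. -/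
noncomputable def zetaY (Y : ℝ) (s : ℂ) : ℂ :=
  ∏ p ∈ primesUpTo Y, (1 - (p : ℂ) ^ (-s))⁻¹

namespace Stmt10Aux

lemma cheb (n : ℕ) :
    ∑ p ∈ (Finset.range (n+1)).filter Nat.Prime, Real.log p ≤ n * Real.log 4 := by
  have h1 : Real.log (primorial n) ≤ Real.log ((4:ℝ) ^ n) := by
    apply Real.log_le_log (by exact_mod_cast primorial_pos n)
    exact_mod_cast primorial_le_4_pow n
  rw [primorial, Nat.cast_prod, Real.log_prod, Real.log_pow] at h1
  · simpa using h1
  · intro p hp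
    simp only [Finset.mem_filter] at hp
    exact_mod_cast hp.2.pos.ne'

lemma mem_primesUpTo {Y : ℝ} {p : ℕ} : p ∈ primesUpTo Y ↔ p.Prime ∧ p ≤ ⌊Y⌋₊ := by
  simp [primesUpTo, Nat.lt_succ_iff, and_comm]

lemma abs_x {p : ℕ} (hp : 0 < p) (s : ℂ) :
    ‖(p : ℂ) ^ (-s)‖ = (p : ℝ) ^ (-s.re) := by
  rw [show ((p:ℂ)) = ((p:ℝ):ℂ) by push_cast; ring,
    Complex.norm_cpow_eq_rpow_re_of_pos (by exact_mod_cast hp), Complex.neg_re]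

lemma x_le_half {p : ℕ} (hp : 2 ≤ p) {s : ℂ} (hs : 1 ≤ s.re) :
    (p : ℝ) ^ (-s.re) ≤ 1 / 2 := by
  calc (p : ℝ) ^ (-s.re) ≤ (2 : ℝ) ^ (-s.re) :=
        Real.rpow_le_rpow_of_nonpos (by norm_num) (by exact_mod_cast hp)
          (by linarith)
    _ ≤ (2 : ℝ) ^ (-1 : ℝ) := Real.rpow_le_rpow_of_exponent_le (by norm_num) (by linarith)
    _ = 1 / 2 := by rw [Real.rpow_neg_one]; norm_num

lemma half_le_abs {p : ℕ} (hp : 2 ≤ p) {s : ℂ} (hs : 1 ≤ s.re) :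
    1 / 2 ≤ ‖1 - (p : ℂ) ^ (-s)‖ := by
  have h2 := norm_sub_norm_le (1 : ℂ) ((p:ℂ) ^ (-s))
  simp only [norm_one] at h2
  rw [abs_x (by omega) s] at h2
  have := x_le_half hp hs
  linarith

lemma one_sub_ne {p : ℕ} (hp : 2 ≤ p) {s : ℂ} (hs : 1 ≤ s.re) :
    1 - (p : ℂ) ^ (-s) ≠ 0 := by
  intro h
  have := half_le_abs hp hs
  rw [h] at this; simp at this; linarith

lemma abs_inv_le {p : ℕ} (hp : 2 ≤ p) {s : ℂ} (hs : 1 ≤ s.re) :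
    ‖(1 - (p : ℂ) ^ (-s))⁻¹‖ ≤ 2 := by
  rw [norm_inv]
  have h1 := half_le_abs hp hs
  calc ‖1 - (p:ℂ)^(-s)‖⁻¹ ≤ (1/2 : ℝ)⁻¹ := by
        apply inv_anti₀ (by norm_num) h1
    _ = 2 := by norm_num

lemma factor_hasDeriv {p : ℕ} (hp : 2 ≤ p) {s : ℂ} (hs : 1 ≤ s.re) :
    HasDerivAt (fun z => (1 - (p : ℂ) ^ (-z))⁻¹)
      (-(Complex.log p * (p:ℂ) ^ (-s)) / (1 - (p : ℂ) ^ (-s)) ^ 2) s := by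
  have hp0 : (p : ℂ) ≠ 0 := by exact_mod_cast (by omega : p ≠ 0)
  have h1 : HasDerivAt (fun z : ℂ => (p:ℂ) ^ (-z)) ((p:ℂ) ^ (-s) * Complex.log p * (-1)) s :=
    (hasDerivAt_neg s).const_cpow (Or.inl hp0)
  have h2 : HasDerivAt (fun z : ℂ => 1 - (p:ℂ) ^ (-z)) (Complex.log p * (p:ℂ) ^ (-s)) s := by
    have := (hasDerivAt_const s (1:ℂ)).fun_sub h1
    exact this.congr_deriv (by ring)
  exact h2.inv (one_sub_ne hp hs)

lemma zetaY_ne {Y : ℝ} {s : ℂ} (hs : 1 ≤ s.re) : zetaY Y s ≠ 0 := by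
  apply Finset.prod_ne_zero_iff.mpr
  intro p hp
  exact inv_ne_zero (one_sub_ne (mem_primesUpTo.mp hp).1.two_le hs)

lemma neg_logDeriv_eq {Y : ℝ} {s : ℂ} (hs : 1 ≤ s.re) :
    -(deriv (zetaY Y) s / zetaY Y s) =
      ∑ p ∈ primesUpTo Y, (Real.log p : ℂ) * (p:ℂ) ^ (-s) / (1 - (p:ℂ) ^ (-s)) := by
  have hD : HasDerivAt (zetaY Y)
      (∑ p ∈ primesUpTo Y, (∏ q ∈ (primesUpTo Y).erase p, (1 - (q:ℂ) ^ (-s))⁻¹) •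
        (-(Complex.log p * (p:ℂ) ^ (-s)) / (1 - (p:ℂ) ^ (-s)) ^ 2)) s := by
    apply HasDerivAt.fun_finsetProd
    intro p hp
    exact factor_hasDeriv (mem_primesUpTo.mp hp).1.two_le hs
  have hd : deriv (zetaY Y) s = _ := hD.deriv
  have hterm : ∀ p ∈ primesUpTo Y,
      (∏ q ∈ (primesUpTo Y).erase p, (1 - (q:ℂ) ^ (-s))⁻¹) •
        (-(Complex.log p * (p:ℂ) ^ (-s)) / (1 - (p:ℂ) ^ (-s)) ^ 2)
      = -((Real.log p : ℂ) * (p:ℂ) ^ (-s) / (1 - (p:ℂ) ^ (-s)) * zetaY Y s) := by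
    intro p hp
    have h2 := (mem_primesUpTo.mp hp).1.two_le
    have hne := one_sub_ne h2 hs
    have hprod : (1 - (p:ℂ) ^ (-s))⁻¹ * ∏ q ∈ (primesUpTo Y).erase p, (1 - (q:ℂ) ^ (-s))⁻¹
        = zetaY Y s := by
      rw [zetaY]; exact Finset.mul_prod_erase _ (fun q : ℕ => (1 - (q:ℂ) ^ (-s))⁻¹) hp
    have hlog : (Complex.log p) = (Real.log p : ℂ) := (Complex.natCast_log).symm
    rw [smul_eq_mul, ← hprod, hlog]
    field_simp
  rw [hd, Finset.sum_congr rfl hterm, Finset.sum_neg_distrib, ← Finset.sum_mul, neg_div,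
    neg_neg, mul_div_assoc, div_self (zetaY_ne hs), mul_one]

lemma geom_tail {x : ℂ} (hx : 1 - x ≠ 0) (M : ℕ) :
    x / (1 - x) - ∑ m ∈ Finset.Icc 1 M, x ^ m = x ^ (M + 1) / (1 - x) := by
  have hx1 : x ≠ 1 := by intro h; simp [h] at hx
  have h1 : ∑ m ∈ Finset.Icc 1 M, x ^ m = x * ((x ^ M - 1) / (x - 1)) := by
    rw [← Finset.Ico_add_one_right_eq_Icc, Finset.sum_Ico_eq_sum_range]
    simp only [Nat.add_sub_cancel, Nat.succ_sub_one, pow_add, pow_one]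
    rw [← Finset.mul_sum, geom_sum_eq hx1]
  rw [h1]
  have hx' : x - 1 ≠ 0 := by intro h; apply hx; linear_combination -h
  field_simp
  ring

lemma cast_pow_cpow {p : ℕ} (hp : 0 < p) (m : ℕ) (s : ℂ) :
    ((p ^ m : ℕ) : ℂ) ^ (-s) = ((p : ℂ) ^ (-s)) ^ m := by
  have harg : (p : ℂ).arg = 0 := by
    rw [show ((p:ℂ)) = ((p:ℝ):ℂ) by push_cast; ring]
    exact Complex.arg_ofReal_of_nonneg (by positivity)
  rw [show ((p ^ m : ℕ) : ℂ) = (p : ℂ) ^ m by push_cast; ring,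
    ← Complex.cpow_nat_mul' (by simp [harg]; positivity) (by simp [harg]; positivity),
    Complex.cpow_nat_mul]

lemma sum_vonMangoldt (Y : ℝ) (hY : 2 ≤ Y) (s : ℂ) :
    ∑ n ∈ Finset.Icc 1 ⌊Y⌋₊, (ArithmeticFunction.vonMangoldt n : ℂ) * (n : ℂ) ^ (-s)
      = ∑ p ∈ primesUpTo Y, ∑ m ∈ Finset.Icc 1 (Nat.log p ⌊Y⌋₊),
          (Real.log p : ℂ) * ((p:ℂ) ^ (-s)) ^ m := by
  have hN : ⌊Y⌋₊ ≠ 0 := by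
    have : (2:ℕ) ≤ ⌊Y⌋₊ := Nat.le_floor (by norm_num [hY])
    omega
  rw [Finset.sum_sigma' (primesUpTo Y) _ (fun p m => (Real.log p : ℂ) * ((p:ℂ) ^ (-s)) ^ m)]
  rw [← Finset.sum_filter_of_ne
    (f := fun n => (ArithmeticFunction.vonMangoldt n : ℂ) * (n : ℂ) ^ (-s))
    (p := fun n => IsPrimePow n) (s := Finset.Icc 1 ⌊Y⌋₊)
    (by intro n _ h
        by_contra hn
        exact h (by simp [ArithmeticFunction.vonMangoldt_apply, hn]))]
  apply Finset.sum_nbij' (i := fun n => (⟨n.minFac, n.factorization n.minFac⟩ : Σ _ : ℕ, ℕ))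
    (j := fun x => x.1 ^ x.2)
  · intro n hn
    simp only [Finset.mem_filter, Finset.mem_Icc] at hn
    obtain ⟨⟨h1, h2⟩, hpp⟩ := hn
    obtain ⟨p, k, hp, hk, rfl⟩ := (isPrimePow_nat_iff _).mp hpp
    have hmf : (p ^ k).minFac = p := hp.pow_minFac hk.ne'
    have hfac : (p ^ k).factorization p = k := by
      rw [hp.factorization_pow, Finsupp.single_eq_same]
    rw [Finset.mem_sigma, hmf, hfac]
    constructor
    · exact mem_primesUpTo.mpr ⟨hp, le_trans (Nat.le_self_pow hk.ne' p) h2⟩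
    · rw [Finset.mem_Icc]
      exact ⟨hk, (Nat.le_log_iff_pow_le hp.one_lt hN).mpr h2⟩
  · intro x hx
    rw [Finset.mem_sigma] at hx
    obtain ⟨hp, hm⟩ := hx
    rw [Finset.mem_Icc] at hm
    have hpp := (mem_primesUpTo.mp hp).1
    simp only [Finset.mem_filter, Finset.mem_Icc]
    refine ⟨⟨Nat.one_le_iff_ne_zero.mpr (pow_ne_zero _ hpp.pos.ne'), ?_⟩, ?_⟩
    · exact (Nat.le_log_iff_pow_le hpp.one_lt hN).mp hm.2
    · exact hpp.prime.isPrimePow.pow (by omega)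
  · intro n hn
    simp only [Finset.mem_filter, Finset.mem_Icc] at hn
    obtain ⟨⟨h1, h2⟩, hpp⟩ := hn
    obtain ⟨p, k, hp, hk, rfl⟩ := (isPrimePow_nat_iff _).mp hpp
    have hmf : (p ^ k).minFac = p := hp.pow_minFac hk.ne'
    simp only [hmf, hp.factorization_pow, Finsupp.single_eq_same]
  · intro x hx
    obtain ⟨p, m⟩ := x
    rw [Finset.mem_sigma] at hx
    dsimp only at hx ⊢
    obtain ⟨hp, hm⟩ := hx
    rw [Finset.mem_Icc] at hm
    have hpp := (mem_primesUpTo.mp hp).1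
    have hmf : (p ^ m).minFac = p := hpp.pow_minFac (by omega)
    simp only [hmf, hpp.factorization_pow, Finsupp.single_eq_same]
  · intro n hn
    simp only [Finset.mem_filter, Finset.mem_Icc] at hn
    obtain ⟨⟨h1, h2⟩, hpp⟩ := hn
    obtain ⟨p, k, hp, hk, rfl⟩ := (isPrimePow_nat_iff _).mp hpp
    have hmf : (p ^ k).minFac = p := hp.pow_minFac hk.ne'
    have hfac : (p ^ k).factorization p = k := by
      rw [hp.factorization_pow, Finsupp.single_eq_same]
    simp only [hmf, hfac]
    rw [ArithmeticFunction.vonMangoldt_apply_pow hk.ne',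
      ArithmeticFunction.vonMangoldt_apply_prime hp, cast_pow_cpow hp.pos]

lemma dyadic {Y : ℝ} (hY : 2 ≤ Y) (A : Finset ℕ)
    (hA : ∀ p ∈ A, p.Prime ∧ Y < (p:ℝ) * (p:ℝ)) :
    ∑ p ∈ A, Real.log p / ((p:ℝ) * (p:ℝ)) ≤ 8 * Real.log 4 / Real.sqrt Y := by
  have hY0 : (0:ℝ) < Y := by linarith
  have hsY : 0 < Real.sqrt Y := Real.sqrt_pos.mpr hY0
  set m := ⌊Real.sqrt Y⌋₊ with hm
  set k₀ := Nat.log 2 (m + 1) with hk₀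
  set K := A.sup (fun p => Nat.log 2 p) with hK
  have hpA : ∀ p ∈ A, Real.sqrt Y < (p:ℝ) := by
    intro p hp
    obtain ⟨hpp, hp2⟩ := hA p hp
    nlinarith [Real.sq_sqrt hY0.le, Real.sqrt_nonneg Y,
      (by exact_mod_cast hpp.pos : (0:ℝ) < (p:ℝ))]
  have hmaps : ∀ p ∈ A, Nat.log 2 p ∈ Finset.Icc k₀ K := by
    intro p hp
    rw [Finset.mem_Icc]
    constructor
    · apply Nat.log_mono_right
      have h1 : (m:ℝ) ≤ Real.sqrt Y := Nat.floor_le (Real.sqrt_nonneg Y)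
      have h2 := hpA p hp
      have : (m:ℝ) < (p:ℝ) := by linarith
      exact_mod_cast this
    · exact Finset.le_sup (f := fun p => Nat.log 2 p) hp
  rw [← Finset.sum_fiberwise_of_maps_to hmaps]
  have hfib : ∀ k ∈ Finset.Icc k₀ K,
      ∑ p ∈ A.filter (fun p => Nat.log 2 p = k), Real.log p / ((p:ℝ) * (p:ℝ))
        ≤ 2 * Real.log 4 * (1/2 : ℝ)^k := by
    intro k _
    have step1 : ∀ p ∈ A.filter (fun p => Nat.log 2 p = k),
        Real.log p / ((p:ℝ) * (p:ℝ)) ≤ Real.log p * ((1/4 : ℝ)^k) := by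
      intro p hp
      rw [Finset.mem_filter] at hp
      obtain ⟨hpA', hlog⟩ := hp
      have hpp := (hA p hpA').1
      have hp2k : (2:ℕ)^k ≤ p := by rw [← hlog]; exact Nat.pow_log_le_self 2 hpp.pos.ne'
      have hp2kR : (2:ℝ)^k ≤ (p:ℝ) := by exact_mod_cast hp2k
      have hppos : (0:ℝ) < (p:ℝ) := by exact_mod_cast hpp.pos
      have hlogp : 0 ≤ Real.log p := Real.log_natCast_nonneg p
      rw [div_eq_mul_inv]
      apply mul_le_mul_of_nonneg_left _ hlogp
      have h2k : (0:ℝ) < (2:ℝ)^k := by positivity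
      have h4e : (1/4:ℝ)^k = (((2:ℝ)^k) * ((2:ℝ)^k))⁻¹ := by
        rw [← mul_pow, ← inv_pow]; norm_num
      rw [h4e]
      apply inv_anti₀ (by positivity)
      nlinarith
    calc ∑ p ∈ A.filter (fun p => Nat.log 2 p = k), Real.log p / ((p:ℝ) * (p:ℝ))
        ≤ ∑ p ∈ A.filter (fun p => Nat.log 2 p = k), Real.log p * ((1/4:ℝ)^k) :=
          Finset.sum_le_sum step1
      _ = (∑ p ∈ A.filter (fun p => Nat.log 2 p = k), Real.log p) * ((1/4:ℝ)^k) :=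
          (Finset.sum_mul _ _ _).symm
      _ ≤ ((2^(k+1) - 1 : ℕ) * Real.log 4) * ((1/4:ℝ)^k) := by
          apply mul_le_mul_of_nonneg_right _ (by positivity)
          calc ∑ p ∈ A.filter (fun p => Nat.log 2 p = k), Real.log p
              ≤ ∑ p ∈ (Finset.range (2^(k+1) - 1 + 1)).filter Nat.Prime, Real.log p := by
                apply Finset.sum_le_sum_of_subset_of_nonneg
                · intro p hp
                  rw [Finset.mem_filter] at hp ⊢
                  obtain ⟨hpA', hlog⟩ := hp
                  have hpp := (hA p hpA').1
                  refine ⟨?_, hpp⟩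
                  rw [Finset.mem_range]
                  have hlt : p < 2^(Nat.log 2 p + 1) := Nat.lt_pow_succ_log_self (by norm_num) p
                  rw [hlog] at hlt
                  have h1 : 1 ≤ (2:ℕ)^(k+1) := Nat.one_le_two_pow
                  rw [Nat.sub_add_cancel h1]
                  exact hlt
                · intro p _ _
                  exact Real.log_natCast_nonneg p
            _ ≤ (2^(k+1) - 1 : ℕ) * Real.log 4 := cheb _
      _ ≤ 2 * Real.log 4 * (1/2:ℝ)^k := by
          have h4 : (0:ℝ) < Real.log 4 := Real.log_pos (by norm_num)
          have hcast : ((2^(k+1) - 1 : ℕ) : ℝ) ≤ 2 * 2^k := by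
            have h1 : (2:ℕ)^(k+1) - 1 ≤ 2^(k+1) := Nat.sub_le _ _
            have h2 : ((2^(k+1):ℕ):ℝ) = 2 * 2^k := by push_cast [pow_succ]; ring
            calc ((2^(k+1) - 1 : ℕ) : ℝ) ≤ ((2^(k+1):ℕ):ℝ) := by exact_mod_cast h1
              _ = 2 * 2^k := h2
          have he : (1/4:ℝ)^k = (1/2:ℝ)^k * (1/2:ℝ)^k := by
            rw [← mul_pow]; norm_num
          have hp2 : (0:ℝ) < (1/2:ℝ)^k := by positivity
          have hkey : (2:ℝ)^k * (1/2:ℝ)^k = 1 := by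
            rw [← mul_pow]; norm_num
          have h1 : ((2^(k+1)-1:ℕ):ℝ) * Real.log 4 * ((1/4:ℝ)^k)
              ≤ (2*2^k) * Real.log 4 * ((1/4:ℝ)^k) := by
            apply mul_le_mul_of_nonneg_right (mul_le_mul_of_nonneg_right hcast h4.le)
              (by positivity)
          have h2 : (2*(2:ℝ)^k) * Real.log 4 * ((1/4:ℝ)^k) = 2 * Real.log 4 * (1/2:ℝ)^k := by
            calc (2*(2:ℝ)^k) * Real.log 4 * ((1/4:ℝ)^k)
                = 2 * Real.log 4 * (((2:ℝ)^k * (1/2:ℝ)^k) * (1/2:ℝ)^k) := by rw [he]; ring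
              _ = 2 * Real.log 4 * (1/2:ℝ)^k := by rw [hkey]; ring
          linarith
  calc ∑ k ∈ Finset.Icc k₀ K, ∑ p ∈ A.filter (fun p => Nat.log 2 p = k),
        Real.log p / ((p:ℝ) * (p:ℝ))
      ≤ ∑ k ∈ Finset.Icc k₀ K, 2 * Real.log 4 * (1/2:ℝ)^k := Finset.sum_le_sum hfib
    _ = 2 * Real.log 4 * ∑ k ∈ Finset.Icc k₀ K, (1/2:ℝ)^k := by rw [Finset.mul_sum]
    _ ≤ 2 * Real.log 4 * (2 * (1/2:ℝ)^k₀) := by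
        have h4 : (0:ℝ) < Real.log 4 := Real.log_pos (by norm_num)
        apply mul_le_mul_of_nonneg_left _ (by positivity)
        rw [← Finset.Ico_add_one_right_eq_Icc, Finset.sum_Ico_eq_sum_range]
        have hpa : ∀ j, (1/2:ℝ)^(k₀ + j) = (1/2:ℝ)^k₀ * (1/2:ℝ)^j := fun j => pow_add _ _ _
        simp only [hpa]
        rw [← Finset.mul_sum]
        have hgs : ∑ j ∈ Finset.range (K + 1 - k₀), (1/2:ℝ)^j ≤ 2 := by
          have hg := geom_sum_eq (by norm_num : (1/2:ℝ) ≠ 1) (K + 1 - k₀)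
          rw [hg]
          have h0 : (0:ℝ) ≤ (1/2:ℝ)^(K+1-k₀) := by positivity
          have he : ((1/2:ℝ)^(K+1-k₀) - 1)/((1/2:ℝ)-1) = 2 - 2*(1/2:ℝ)^(K+1-k₀) := by ring
          linarith [he ▸ le_refl (((1/2:ℝ)^(K+1-k₀) - 1)/((1/2:ℝ)-1))]
        have hp2 : (0:ℝ) ≤ (1/2:ℝ)^k₀ := by positivity
        nlinarith
    _ ≤ 8 * Real.log 4 / Real.sqrt Y := by
        have h4 : (0:ℝ) < Real.log 4 := Real.log_pos (by norm_num)
        have hk : Real.sqrt Y < 2^(k₀+1) := by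
          have h1 : (m + 1 : ℕ) < 2^(k₀ + 1) := Nat.lt_pow_succ_log_self (by norm_num) _
          have h2 : Real.sqrt Y < (m:ℝ) + 1 := Nat.lt_floor_add_one _
          have h3 : ((m+1:ℕ):ℝ) ≤ ((2^(k₀+1):ℕ):ℝ) := by exact_mod_cast h1.le
          push_cast at h3
          calc Real.sqrt Y < (m:ℝ) + 1 := h2
            _ ≤ (2:ℝ)^(k₀+1) := by exact_mod_cast h3
        have hkey : (2:ℝ)^k₀ * (1/2:ℝ)^k₀ = 1 := by rw [← mul_pow]; norm_num
        have hp2 : (0:ℝ) < (1/2:ℝ)^k₀ := by positivity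
        have hp2' : (0:ℝ) < (2:ℝ)^k₀ := by positivity
        have hhalf : (1/2:ℝ)^k₀ ≤ 2 / Real.sqrt Y := by
          rw [le_div_iff₀ hsY]
          have h2' : Real.sqrt Y < 2 * 2^k₀ := by
            have hps : ((2:ℝ))^(k₀+1) = 2 * 2^k₀ := by rw [pow_succ]; ring
            linarith [hps ▸ hk]
          nlinarith
        have heq : 8 * Real.log 4 / Real.sqrt Y = 2 * Real.log 4 * (2 * (2 / Real.sqrt Y)) := by
          field_simp; ring
        rw [heq]
        have := mul_le_mul_of_nonneg_left hhalf (by positivity : (0:ℝ) ≤ 2)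
        nlinarith

end Stmt10Aux

open Stmt10Aux in
/-- For `Y ≥ 2` and `Re s ≥ 1`,
`-ζ'(s,Y)/ζ(s,Y) = ∑_{n ≤ Y} Λ(n) n^{-s} + O(Y^{1/2 - Re s})`
with an absolute implied constant. -/
theorem stmt_10 :
    ∃ C : ℝ, 0 < C ∧ ∀ Y : ℝ, 2 ≤ Y → ∀ s : ℂ, 1 ≤ s.re →
      ‖-(deriv (zetaY Y) s / zetaY Y s) -
          ∑ n ∈ Finset.Icc 1 ⌊Y⌋₊, (ArithmeticFunction.vonMangoldt n : ℂ) * (n : ℂ) ^ (-s)‖ ≤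
        C * Y ^ (1 / 2 - s.re) := by
  refine ⟨100, by norm_num, ?_⟩
  intro Y hY s hs
  have hY0 : (0:ℝ) < Y := by linarith
  set N := ⌊Y⌋₊ with hNdef
  have hN2 : 2 ≤ N := Nat.le_floor (by norm_num [hY])
  have hN0 : N ≠ 0 := by omega
  have hYN : (N:ℝ) ≤ Y := Nat.floor_le hY0.le
  have hNY : Y < (N:ℝ) + 1 := Nat.lt_floor_add_one Y
  have h4 : (0:ℝ) < Real.log 4 := Real.log_pos (by norm_num)
  have h4' : Real.log 4 ≤ 3 := by
    have := Real.log_le_sub_one_of_pos (by norm_num : (0:ℝ) < 4)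
    linarith
  -- rewrite the difference as a sum over primes of tails
  rw [neg_logDeriv_eq hs, sum_vonMangoldt Y hY s, ← Finset.sum_sub_distrib]
  have hterm : ∀ p ∈ primesUpTo Y,
      (Real.log p : ℂ) * (p:ℂ) ^ (-s) / (1 - (p:ℂ) ^ (-s))
        - ∑ m ∈ Finset.Icc 1 (Nat.log p N), (Real.log p : ℂ) * ((p:ℂ) ^ (-s)) ^ m
      = (Real.log p : ℂ) * (((p:ℂ) ^ (-s)) ^ (Nat.log p N + 1) / (1 - (p:ℂ) ^ (-s))) := by
    intro p hp
    have h2 := (mem_primesUpTo.mp hp).1.two_le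
    rw [← Finset.mul_sum, mul_div_assoc, ← mul_sub, ← geom_tail (one_sub_ne h2 hs)]
  rw [Finset.sum_congr rfl hterm]
  -- bound the absolute value termwise
  have habs : ‖∑ p ∈ primesUpTo Y, (Real.log p : ℂ) *
        (((p:ℂ) ^ (-s)) ^ (Nat.log p N + 1) / (1 - (p:ℂ) ^ (-s)))‖
      ≤ ∑ p ∈ primesUpTo Y,
          Real.log p * ((p:ℝ) ^ (-s.re)) ^ (Nat.log p N + 1) * 2 := by
    refine le_trans (norm_sum_le _ _) (Finset.sum_le_sum ?_)
    intro p hp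
    have hpp := (mem_primesUpTo.mp hp).1
    have h2 := hpp.two_le
    have hlogp : 0 ≤ Real.log p := Real.log_natCast_nonneg p
    rw [norm_mul, Complex.norm_real, Real.norm_eq_abs, _root_.abs_of_nonneg hlogp, div_eq_mul_inv, norm_mul, norm_pow,
      abs_x hpp.pos, mul_assoc]
    apply mul_le_mul_of_nonneg_left _ hlogp
    apply mul_le_mul_of_nonneg_left (abs_inv_le h2 hs) (by positivity)
  refine le_trans habs ?_
  -- rewrite the power as an rpow of p^(M+1)
  have hpow : ∀ p : ℕ, p.Prime →
      ((p:ℝ) ^ (-s.re)) ^ (Nat.log p N + 1) = (((p ^ (Nat.log p N + 1) : ℕ)):ℝ) ^ (-s.re) := by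
    intro p hpp
    have hp0 : (0:ℝ) ≤ (p:ℝ) := by positivity
    rw [← Real.rpow_natCast ((p:ℝ) ^ (-s.re)) (Nat.log p N + 1), ← Real.rpow_mul hp0,
      mul_comm, Real.rpow_mul hp0, Real.rpow_natCast]
    push_cast
    ring_nf
  -- split into small and large primes
  rw [← Finset.sum_filter_add_sum_filter_not (primesUpTo Y) (fun p => p * p ≤ N)]
  have hS1 : ∑ p ∈ (primesUpTo Y).filter (fun p => p * p ≤ N),
      Real.log p * ((p:ℝ) ^ (-s.re)) ^ (Nat.log p N + 1) * 2
      ≤ 2 * Real.log 4 * Y ^ ((1:ℝ)/2 - s.re) := by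
    have hstep : ∀ p ∈ (primesUpTo Y).filter (fun p => p * p ≤ N),
        Real.log p * ((p:ℝ) ^ (-s.re)) ^ (Nat.log p N + 1) * 2
          ≤ 2 * (Y ^ (-s.re)) * Real.log p := by
      intro p hp
      rw [Finset.mem_filter] at hp
      have hpp := (mem_primesUpTo.mp hp.1).1
      have hlogp : 0 ≤ Real.log p := Real.log_natCast_nonneg p
      have hNK : Y < ((p ^ (Nat.log p N + 1) : ℕ) : ℝ) := by
        have h1 : N < p ^ (Nat.log p N + 1) := Nat.lt_pow_succ_log_self hpp.one_lt _
        have : (N:ℝ) + 1 ≤ ((p ^ (Nat.log p N + 1) : ℕ) : ℝ) := by exact_mod_cast h1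
        linarith
      have hle : ((p ^ (Nat.log p N + 1) : ℕ) : ℝ) ^ (-s.re) ≤ Y ^ (-s.re) :=
        Real.rpow_le_rpow_of_nonpos hY0 hNK.le (by linarith)
      rw [hpow p hpp]
      nlinarith [Real.rpow_nonneg hY0.le (-s.re),
        Real.rpow_nonneg (by positivity : (0:ℝ) ≤ ((p ^ (Nat.log p N + 1) : ℕ) : ℝ)) (-s.re)]
    refine le_trans (Finset.sum_le_sum hstep) ?_
    rw [← Finset.mul_sum]
    have hsub : ∑ p ∈ (primesUpTo Y).filter (fun p => p * p ≤ N), Real.log p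
        ≤ (Nat.sqrt N : ℝ) * Real.log 4 := by
      refine le_trans (Finset.sum_le_sum_of_subset_of_nonneg ?_
        (fun p _ _ => Real.log_natCast_nonneg p)) (cheb (Nat.sqrt N))
      intro p hp
      rw [Finset.mem_filter] at hp ⊢
      refine ⟨?_, (mem_primesUpTo.mp hp.1).1⟩
      rw [Finset.mem_range, Nat.lt_succ_iff, Nat.le_sqrt]
      exact hp.2
    have hsqrt : (Nat.sqrt N : ℝ) ≤ Y ^ ((1:ℝ)/2) := by
      rw [← Real.sqrt_eq_rpow]
      rw [Real.le_sqrt (by positivity) hY0.le]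
      have h1 : (Nat.sqrt N) * (Nat.sqrt N) ≤ N := Nat.sqrt_le N
      have : ((Nat.sqrt N * Nat.sqrt N : ℕ):ℝ) ≤ (N:ℝ) := by exact_mod_cast h1
      push_cast at this
      nlinarith
    have hrpos : (0:ℝ) ≤ Y ^ (-s.re) := Real.rpow_nonneg hY0.le _
    have hfin : Y ^ ((1:ℝ)/2) * Y ^ (-s.re) = Y ^ ((1:ℝ)/2 - s.re) := by
      rw [← Real.rpow_add hY0]; ring_nf
    calc 2 * Y ^ (-s.re) * ∑ p ∈ (primesUpTo Y).filter (fun p => p * p ≤ N), Real.log p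
        ≤ 2 * Y ^ (-s.re) * ((Nat.sqrt N : ℝ) * Real.log 4) := by
          apply mul_le_mul_of_nonneg_left hsub (by positivity)
      _ ≤ 2 * Y ^ (-s.re) * (Y ^ ((1:ℝ)/2) * Real.log 4) := by
          apply mul_le_mul_of_nonneg_left _ (by positivity)
          apply mul_le_mul_of_nonneg_right hsqrt h4.le
      _ = 2 * Real.log 4 * (Y ^ ((1:ℝ)/2) * Y ^ (-s.re)) := by ring
      _ = 2 * Real.log 4 * Y ^ ((1:ℝ)/2 - s.re) := by rw [hfin]
  have hS2 : ∑ p ∈ (primesUpTo Y).filter (fun p => ¬ p * p ≤ N),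
      Real.log p * ((p:ℝ) ^ (-s.re)) ^ (Nat.log p N + 1) * 2
      ≤ 16 * Real.log 4 * Y ^ ((1:ℝ)/2 - s.re) := by
    have hM1 : ∀ p ∈ (primesUpTo Y).filter (fun p => ¬ p * p ≤ N), Nat.log p N = 1 := by
      intro p hp
      rw [Finset.mem_filter] at hp
      obtain ⟨hp1, hp2⟩ := hp
      obtain ⟨hpp, hpN⟩ := mem_primesUpTo.mp hp1
      have hge : 1 ≤ Nat.log p N := by
        apply (Nat.le_log_iff_pow_le hpp.one_lt hN0).mpr
        simpa using hpN
      have hlt : Nat.log p N < 2 := by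
        by_contra hc
        push_neg at hc
        have := (Nat.le_log_iff_pow_le hpp.one_lt hN0).mp hc
        rw [pow_two] at this
        exact hp2 this
      omega
    have hstep : ∀ p ∈ (primesUpTo Y).filter (fun p => ¬ p * p ≤ N),
        Real.log p * ((p:ℝ) ^ (-s.re)) ^ (Nat.log p N + 1) * 2
          ≤ 2 * Y ^ (1 - s.re) * (Real.log p / ((p:ℝ) * (p:ℝ))) := by
      intro p hp
      have hM := hM1 p hp
      rw [Finset.mem_filter] at hp
      obtain ⟨hp1, hp2⟩ := hp
      obtain ⟨hpp, hpN⟩ := mem_primesUpTo.mp hp1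
      have hppos : (0:ℝ) < (p:ℝ) := by exact_mod_cast hpp.pos
      have hlogp : 0 ≤ Real.log p := Real.log_natCast_nonneg p
      have hp2Y : Y < (p:ℝ) * (p:ℝ) := by
        have h1 : N + 1 ≤ p * p := by omega
        have : ((N+1:ℕ):ℝ) ≤ ((p*p:ℕ):ℝ) := by exact_mod_cast h1
        push_cast at this
        linarith
      rw [hM]
      have he1 : ((p:ℝ) ^ (-s.re)) ^ (1 + 1) = ((p:ℝ) * (p:ℝ)) ^ (-s.re) := by
        rw [← Real.rpow_natCast ((p:ℝ) ^ (-s.re)) 2, ← Real.rpow_mul hppos.le,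
          mul_comm, Real.rpow_mul hppos.le, Real.rpow_natCast]
        rw [pow_two]
      rw [he1]
      have he2 : ((p:ℝ) * (p:ℝ)) ^ (-s.re)
          = ((p:ℝ) * (p:ℝ)) ^ (-(s.re - 1)) * ((p:ℝ) * (p:ℝ))⁻¹ := by
        rw [← Real.rpow_neg_one ((p:ℝ) * (p:ℝ)), ← Real.rpow_add (by positivity)]
        ring_nf
      have he3 : ((p:ℝ) * (p:ℝ)) ^ (-(s.re - 1)) ≤ Y ^ (-(s.re - 1)) :=
        Real.rpow_le_rpow_of_nonpos hY0 hp2Y.le (by linarith)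
      have hy1 : Y ^ (-(s.re - 1)) = Y ^ (1 - s.re) := by ring_nf
      rw [he2]
      have hinv : (0:ℝ) ≤ ((p:ℝ) * (p:ℝ))⁻¹ := by positivity
      calc Real.log p * (((p:ℝ) * (p:ℝ)) ^ (-(s.re - 1)) * ((p:ℝ) * (p:ℝ))⁻¹) * 2
          ≤ Real.log p * (Y ^ (1 - s.re) * ((p:ℝ) * (p:ℝ))⁻¹) * 2 := by
            rw [← hy1]
            apply mul_le_mul_of_nonneg_right _ (by norm_num)
            apply mul_le_mul_of_nonneg_left _ hlogp
            exact mul_le_mul_of_nonneg_right he3 hinv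
        _ = 2 * Y ^ (1 - s.re) * (Real.log p / ((p:ℝ) * (p:ℝ))) := by
            rw [div_eq_mul_inv]; ring
    refine le_trans (Finset.sum_le_sum hstep) ?_
    rw [← Finset.mul_sum]
    have hdy : ∑ p ∈ (primesUpTo Y).filter (fun p => ¬ p * p ≤ N),
        Real.log p / ((p:ℝ) * (p:ℝ)) ≤ 8 * Real.log 4 / Real.sqrt Y := by
      apply dyadic hY
      intro p hp
      rw [Finset.mem_filter] at hp
      obtain ⟨hp1, hp2⟩ := hp
      obtain ⟨hpp, _⟩ := mem_primesUpTo.mp hp1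
      refine ⟨hpp, ?_⟩
      have h1 : N + 1 ≤ p * p := by omega
      have : ((N+1:ℕ):ℝ) ≤ ((p*p:ℕ):ℝ) := by exact_mod_cast h1
      push_cast at this
      linarith
    have hsY : 0 < Real.sqrt Y := Real.sqrt_pos.mpr hY0
    have hY1s : (0:ℝ) ≤ Y ^ (1 - s.re) := Real.rpow_nonneg hY0.le _
    have hfin : Y ^ (1 - s.re) / Real.sqrt Y = Y ^ ((1:ℝ)/2 - s.re) := by
      rw [Real.sqrt_eq_rpow, ← Real.rpow_sub hY0]
      ring_nf
    calc 2 * Y ^ (1 - s.re) * ∑ p ∈ (primesUpTo Y).filter (fun p => ¬ p * p ≤ N),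
          Real.log p / ((p:ℝ) * (p:ℝ))
        ≤ 2 * Y ^ (1 - s.re) * (8 * Real.log 4 / Real.sqrt Y) := by
          apply mul_le_mul_of_nonneg_left hdy (by positivity)
      _ = 16 * Real.log 4 * (Y ^ (1 - s.re) / Real.sqrt Y) := by ring
      _ = 16 * Real.log 4 * Y ^ ((1:ℝ)/2 - s.re) := by rw [hfin]
  have hfinal : (2:ℝ) * Real.log 4 * Y ^ ((1:ℝ)/2 - s.re)
      + 16 * Real.log 4 * Y ^ ((1:ℝ)/2 - s.re) ≤ 100 * Y ^ ((1:ℝ)/2 - s.re) := by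
    have hr : (0:ℝ) ≤ Y ^ ((1:ℝ)/2 - s.re) := Real.rpow_nonneg hY0.le _
    nlinarith
  have : (1:ℝ)/2 - s.re = 1/2 - s.re := by norm_num
  linarith [hS1, hS2, hfinal]
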